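/- (Proposition 10) Let L be a dcpo. Then τ^{g-lim-inf} = τ^{g-I-lim-inf}. -/
import Mathlib


open Set

universe u v

variable {L : Type u}

/-- The upper set `↑A = {y : ∃ a ∈ A, a ≤ y}`. -/
def upSet [Preorder L] (A : Set L) : Set L := {y | ∃ a ∈ A, a ≤ y}

/-- The lower set `↓A = {y : ∃ a ∈ A, y ≤ a}`. -/
def downSet [Preorder L] (A : Set L) : Set L := {y | ∃ a ∈ A, y ≤ a}

/-- An ideal on `J`: a family of subsets closed under subsets and finite unions. -/
def IsIdeal {J : Type v} (I : Set (Set J)) : Prop :=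
  (∀ A ∈ I, ∀ B : Set J, B ⊆ A → B ∈ I) ∧ ∀ A ∈ I, ∀ B ∈ I, A ∪ B ∈ I

/-- A (nonempty) directed family of nonempty finite subsets of `L`. -/
def DirectedFamily [Preorder L] (𝓕 : Set (Set L)) : Prop :=
  𝓕.Nonempty ∧ (∀ F ∈ 𝓕, F.Nonempty ∧ F.Finite) ∧
    ∀ E ∈ 𝓕, ∀ F ∈ 𝓕, ∃ H ∈ 𝓕, upSet H ⊆ upSet E ∩ upSet F

/-- A dcpo: every nonempty directed subset has a supremum. -/
def IsDcpo (L : Type u) [PartialOrder L] : Prop :=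
  ∀ D : Set L, D.Nonempty → DirectedOn (· ≤ ·) D → ∃ s, IsLUB D s

/-- A net index: a nonempty directed preordered set. -/
def IsNetIndex (J : Type v) [Preorder J] : Prop :=
  Nonempty J ∧ ∀ a b : J, ∃ c, a ≤ c ∧ b ≤ c

/-- The net `xj` GZS-converges (generalized ideal inf-limit) to `x` w.r.t. ideal `I`. -/
def GZSConv [Preorder L] {J : Type v} (xj : J → L) (I : Set (Set J)) (x : L) : Prop :=
  ∃ 𝓕 : Set (Set L), DirectedFamily 𝓕 ∧ (⋂ F ∈ 𝓕, upSet F) ⊆ upSet {x} ∧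
    ∀ F ∈ 𝓕, {j | xj j ∉ upSet F} ∈ I

/-- The net `xj` IS-converges (ideal inf-limit) to `x` w.r.t. ideal `I`. -/
def ISConv [Preorder L] {J : Type v} (xj : J → L) (I : Set (Set J)) (x : L) : Prop :=
  ∃ D : Set L, D.Nonempty ∧ DirectedOn (· ≤ ·) D ∧ (∃ s, IsLUB D s ∧ x ≤ s) ∧
    ∀ d ∈ D, {j | xj j ∉ upSet {d}} ∈ I

/-- `G ≪ x` for a set `G`: every nonempty directed `D` with `x ≤ sup D` meets `↑G`. -/
def WayBelowSet [Preorder L] (G : Set L) (x : L) : Prop :=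
  ∀ D : Set L, D.Nonempty → DirectedOn (· ≤ ·) D →
    ∀ s, IsLUB D s → x ≤ s → (D ∩ upSet G).Nonempty

/-- Scott open set. -/
def ScottOpen [Preorder L] (U : Set L) : Prop :=
  (∀ x ∈ U, ∀ y, x ≤ y → y ∈ U) ∧
    ∀ D : Set L, D.Nonempty → DirectedOn (· ≤ ·) D →
      ∀ s, IsLUB D s → s ∈ U → (D ∩ U).Nonempty

/-- `fin(x)`: the nonempty finite subsets way below `x`. -/
def finOf [Preorder L] (x : L) : Set (Set L) :=
  {F | F.Nonempty ∧ F.Finite ∧ WayBelowSet F x}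

/-- Quasicontinuous domain. -/
def QuasicontinuousDomain (L : Type u) [PartialOrder L] : Prop :=
  IsDcpo L ∧ ∀ x : L, DirectedFamily (finOf x) ∧ upSet {x} = ⋂ F ∈ finOf x, upSet F

/-- Ideal convergence of a net w.r.t. a topology `T`. -/
def IConv [Preorder L] {J : Type v} (T : TopologicalSpace L) (xj : J → L)
    (I : Set (Set J)) (x : L) : Prop :=
  ∀ U : Set L, T.IsOpen U → x ∈ U → {j | xj j ∉ U} ∈ I

/-- The net `xj` GS-converges (generalized inf-limit) to `x`. -/
def GSConv [Preorder L] {J : Type v} [Preorder J] (xj : J → L) (x : L) : Prop :=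
  ∃ 𝓕 : Set (Set L), DirectedFamily 𝓕 ∧ (⋂ F ∈ 𝓕, upSet F) ⊆ upSet {x} ∧
    ∀ F ∈ 𝓕, ∃ k : J, ∀ j : J, k ≤ j → xj j ∈ upSet F

/-- The generalized inf-limit topology `τ^{g-lim-inf}`. -/
def tauGLimInf (L : Type u) [PartialOrder L] : Set (Set L) :=
  {U | ∀ (J : Type u) [Preorder J], IsNetIndex J →
      ∀ xj : J → L, ∀ x ∈ U, GSConv xj x → ∃ k : J, ∀ j : J, k ≤ j → xj j ∈ U}

/-- The generalized ideal inf-limit topology `τ^{g-I-lim-inf}`. -/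
def tauGILimInf (L : Type u) [PartialOrder L] : Set (Set L) :=
  {U | ∀ (J : Type u) [Preorder J], IsNetIndex J →
      ∀ (xj : J → L) (I : Set (Set J)), IsIdeal I →
      ∀ x ∈ U, GZSConv xj I x → {j | xj j ∉ U} ∈ I}

/-- `x = glim_GZ (x_j)`: generalized ideal eventual-lower-bound limit. -/
def GlimGZ [Preorder L] {J : Type v} (xj : J → L) (I : Set (Set J)) (x : L) : Prop :=
  GZSConv xj I x ∧
    ∀ F : Set L, F.Nonempty → F.Finite → {j | xj j ∉ upSet F} ∈ I → x ∈ upSet F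

/-- The generalized ideal eventual-lower-bound limit topology `τ^{g-I}`. -/
def tauGIlb (L : Type u) [PartialOrder L] : Set (Set L) :=
  {U | ∀ (J : Type u) [Preorder J], IsNetIndex J →
      ∀ (xj : J → L) (I : Set (Set J)), IsIdeal I →
      ∀ x ∈ U, GlimGZ xj I x → {j | xj j ∉ U} ∈ I}

/-- The Scott topology `σ(L)`. -/
def scottTop (L : Type u) [Preorder L] : TopologicalSpace L :=
  TopologicalSpace.generateFrom {U | ScottOpen U}

/-- The Lawson topology `λ(L) = σ(L) ∨ ω(L)`. -/
def lawsonTop (L : Type u) [Preorder L] : TopologicalSpace L :=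
  TopologicalSpace.generateFrom ({U | ScottOpen U} ∪ {V | ∃ x : L, V = (upSet {x})ᶜ})

/-- Meet-continuity of a dcpo. -/
def MeetContinuous (L : Type u) [PartialOrder L] : Prop :=
  ∀ x : L, ∀ D : Set L, D.Nonempty → DirectedOn (· ≤ ·) D →
    ∀ s, IsLUB D s → x ≤ s → x ∈ @closure L (scottTop L) (downSet {x} ∩ downSet D)

/-- Continuous domain: `⇓x` is nonempty, directed, with supremum `x`. -/
def ContinuousDomain (L : Type u) [PartialOrder L] : Prop :=
  IsDcpo L ∧ ∀ x : L, {y : L | WayBelowSet {y} x}.Nonempty ∧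
    DirectedOn (· ≤ ·) {y : L | WayBelowSet {y} x} ∧ IsLUB {y : L | WayBelowSet {y} x} x

/-- Auxiliary index type for the proof of Proposition 10. -/
structure Prop10Idx (J : Type v) (I : Set (Set J)) : Type v where
  j : J
  A : Set J
  hA : A ∈ I
  hj : j ∉ A

instance {J : Type v} (I : Set (Set J)) : Preorder (Prop10Idx J I) where
  le p q := p.A ⊆ q.A
  le_refl p := subset_refl _
  le_trans a b c := Set.Subset.trans

/-- **Proposition 10.** `τ^{g-lim-inf} = τ^{g-I-lim-inf}` on a dcpo. -/
theorem prop10 {L : Type u} [PartialOrder L] (hL : IsDcpo L) :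
    tauGLimInf L = tauGILimInf L := by
  ext U
  constructor
  · -- τ^{g-lim-inf} ⊆ τ^{g-I-lim-inf}
    intro hU J _ hJ xj I hI x hxU hconv
    obtain ⟨𝓕, h𝓕, hsub, hFmem⟩ := hconv
    obtain ⟨F₀, hF₀⟩ := h𝓕.1
    have hIempty : (∅ : Set J) ∈ I := hI.1 _ (hFmem F₀ hF₀) ∅ (empty_subset _)
    by_cases huniv : (Set.univ : Set J) ∈ I
    · exact hI.1 _ huniv _ (subset_univ _)
    · -- build the auxiliary index set K
      let K := Prop10Idx J I
      obtain ⟨j₀⟩ := hJ.1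
      have hKne : Nonempty K := ⟨⟨j₀, ∅, hIempty, notMem_empty _⟩⟩
      have hKdir : ∀ a b : K, ∃ c, a ≤ c ∧ b ≤ c := by
        rintro ⟨j, A, hA, hjA⟩ ⟨j', A', hA', hj'⟩
        have hAB : A ∪ A' ∈ I := hI.2 _ hA _ hA'
        have hne : A ∪ A' ≠ Set.univ := fun h => huniv (h ▸ hAB)
        obtain ⟨j'', hj''⟩ : ∃ j'', j'' ∉ A ∪ A' := by
          by_contra h
          push_neg at h
          exact hne (eq_univ_of_forall h)
        exact ⟨⟨j'', A ∪ A', hAB, hj''⟩, show A ⊆ A ∪ A' from subset_union_left,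
          show A' ⊆ A ∪ A' from subset_union_right⟩
      let yk : K → L := fun p => xj p.j
      have hGS : GSConv yk x := by
        refine ⟨𝓕, h𝓕, hsub, ?_⟩
        intro F hF
        have hAF : {j | xj j ∉ upSet F} ∈ I := hFmem F hF
        have hne : {j | xj j ∉ upSet F} ≠ Set.univ := fun h => huniv (h ▸ hAF)
        obtain ⟨j₁, hj₁⟩ : ∃ j₁, j₁ ∉ {j | xj j ∉ upSet F} := by
          by_contra h
          push_neg at h
          exact hne (eq_univ_of_forall h)
        refine ⟨⟨j₁, {j | xj j ∉ upSet F}, hAF, hj₁⟩, ?_⟩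
        rintro ⟨j, A, hA, hjA⟩ hle
        have hle' : {j | xj j ∉ upSet F} ⊆ A := hle
        have : j ∉ {j | xj j ∉ upSet F} := fun h => hjA (hle' h)
        simpa [yk] using not_not.mp this
      obtain ⟨⟨k, A, hA, hkA⟩, hk⟩ := hU K ⟨hKne, hKdir⟩ yk x hxU hGS
      refine hI.1 A hA _ ?_
      intro j hj
      by_contra hjA
      exact hj (hk ⟨j, A, hA, hjA⟩ (show A ⊆ A from subset_refl A))
  · -- τ^{g-I-lim-inf} ⊆ τ^{g-lim-inf}
    intro hU J _ hJ xj x hxU hconv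
    obtain ⟨𝓕, h𝓕, hsub, hFmem⟩ := hconv
    let I : Set (Set J) := {A | ∃ k : J, ∀ j, k ≤ j → j ∉ A}
    have hI : IsIdeal I := by
      constructor
      · rintro A ⟨k, hk⟩ B hBA
        exact ⟨k, fun j hj hjB => hk j hj (hBA hjB)⟩
      · rintro A ⟨k, hk⟩ B ⟨k', hk'⟩
        obtain ⟨c, hc, hc'⟩ := hJ.2 k k'
        exact ⟨c, fun j hj h => h.elim (hk j (hc.trans hj)) (hk' j (hc'.trans hj))⟩
    have hGZ : GZSConv xj I x := by
      refine ⟨𝓕, h𝓕, hsub, ?_⟩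
      intro F hF
      obtain ⟨k, hk⟩ := hFmem F hF
      exact ⟨k, fun j hj hmem => hmem (hk j hj)⟩
    obtain ⟨k, hk⟩ := hU J hJ xj I hI x hxU hGZ
    exact ⟨k, fun j hj => not_not.mp (hk j hj)⟩
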